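/- For t ≥ 1, the quadruple integral ∫_{b=0}^{1/t} ∫_{α=1-b}^{1} ∫_{a=1-b}^{α} ∫_{s=t(α-a)/a}^{(α-a)/(abα)} 1 ds da dα db equals ∫_{b=0}^{1/t} [b(b(2+b)t - 8) + 2(b(2+t) - 4)log(1-b)]/(4b) db; in particular it is O(t^{-3}) as t → ∞. -/

import Mathlib

open MeasureTheory Filter Asymptotics intervalIntegral

private lemma omega1_triple_eq (t b : ℝ) (hb0 : 0 < b) (hb1 : b < 1) :
    (∫ α in (1 - b)..1, ∫ a in (1 - b)..α,
        ∫ _s in (t * (α - a) / a)..((α - a) / (a * b * α)), (1 : ℝ))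
    = (b * (b * (2 + b) * t - 8) + 2 * (b * (2 + t) - 4) * Real.log (1 - b)) / (4 * b) := by
  have hc0 : 0 < 1 - b := by linarith
  set c : ℝ := 1 - b with hc
  set K : ℝ := Real.log c with hK
  have hcle : c ≤ 1 := by rw [hc]; linarith
  have hmid : ∀ α ∈ Set.uIcc c 1,
      (∫ a in c..α, ∫ _s in (t * (α - a) / a)..((α - a) / (a * b * α)), (1 : ℝ))
      = (α * Real.log α - α - (α * K - c)) * (1 / (b * α) - t) := by
    intro α hα
    rw [Set.uIcc_of_le hcle] at hα
    have hαc : c ≤ α := hα.1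
    have hα0 : 0 < α := lt_of_lt_of_le hc0 hαc
    have hne : ∀ x ∈ Set.uIcc c α, x ≠ 0 := by
      intro x hx
      rw [Set.uIcc_of_le hαc] at hx
      exact (lt_of_lt_of_le hc0 hx.1).ne'
    have hsimp : ∀ a : ℝ, (∫ _s in (t * (α - a) / a)..((α - a) / (a * b * α)), (1 : ℝ))
        = (α - a) / (a * b * α) - t * (α - a) / a := by
      intro a; simp
    simp_rw [hsimp]
    have hderiv : ∀ x ∈ Set.uIcc c α,
        HasDerivAt (fun a => (α * Real.log a - a) * (1 / (b * α) - t))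
          ((α - x) / (x * b * α) - t * (α - x) / x) x := by
      intro x hx
      have hx0 : x ≠ 0 := hne x hx
      have h1 : HasDerivAt (fun a : ℝ => α * Real.log a - a) (α * x⁻¹ - 1) x :=
        ((Real.hasDerivAt_log hx0).const_mul α).sub (hasDerivAt_id x)
      convert h1.mul_const (1 / (b * α) - t) using 1
      · rfl
      · rfl
      field_simp
    have hint : IntervalIntegrable
        (fun a => (α - a) / (a * b * α) - t * (α - a) / a) volume c α := by
      apply ContinuousOn.intervalIntegrable
      apply ContinuousOn.sub
      · exact ((continuous_const.sub continuous_id).continuousOn).div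
          (((continuous_id.mul continuous_const).mul continuous_const).continuousOn)
          (fun x hx => mul_ne_zero (mul_ne_zero (hne x hx) hb0.ne') hα0.ne')
      · exact ((continuous_const.mul (continuous_const.sub continuous_id)).continuousOn).div
          continuous_id.continuousOn (fun x hx => hne x hx)
    rw [intervalIntegral.integral_eq_sub_of_hasDerivAt hderiv hint]
    rw [hK]
    ring
  rw [intervalIntegral.integral_congr hmid]
  have hne1 : ∀ x ∈ Set.uIcc c 1, x ≠ 0 := by
    intro x hx
    rw [Set.uIcc_of_le hcle] at hx
    exact (lt_of_lt_of_le hc0 hx.1).ne'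
  have hH : ∀ x ∈ Set.uIcc c 1,
      HasDerivAt (fun x => (x * Real.log x - x) / b - (K + 1) * x / b + (c / b) * Real.log x
          - t * (x ^ 2 / 2 * Real.log x - x ^ 2 / 4) + t * (K + 1) * x ^ 2 / 2 - t * c * x)
        ((x * Real.log x - x - (x * K - c)) * (1 / (b * x) - t)) x := by
    intro x hx
    have hx0 : x ≠ 0 := hne1 x hx
    have hlog := Real.hasDerivAt_log hx0
    have h1 : HasDerivAt (fun y : ℝ => y * Real.log y) (1 * Real.log x + x * x⁻¹) x :=
      (hasDerivAt_id x).mul hlog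
    have h2 : HasDerivAt (fun y : ℝ => y ^ 2 / 2 * Real.log y)
        ((↑2 * x ^ (2 - 1) / 2) * Real.log x + x ^ 2 / 2 * x⁻¹) x :=
      ((hasDerivAt_pow 2 x).div_const 2).mul hlog
    have h3 := (((((h1.sub (hasDerivAt_id x)).div_const b).sub
        (((hasDerivAt_id x).const_mul (K + 1)).div_const b)).add
        (hlog.const_mul (c / b))).sub
        ((h2.sub ((hasDerivAt_pow 2 x).div_const 4)).const_mul t)).add
        ((((hasDerivAt_pow 2 x).const_mul (t * (K + 1))).div_const 2).sub
        ((hasDerivAt_id x).const_mul (t * c)))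
    convert h3 using 1
    · rfl
    · rfl
    · ext y; simp only [id_eq, Pi.add_apply, Pi.sub_apply]; ring
    · field_simp
      ring
  have hcont : IntervalIntegrable
      (fun α => (α * Real.log α - α - (α * K - c)) * (1 / (b * α) - t)) volume c 1 := by
    apply ContinuousOn.intervalIntegrable
    have hlogC : ContinuousOn Real.log (Set.uIcc c 1) :=
      Real.continuousOn_log.mono (fun x hx => by simpa using hne1 x hx)
    exact (((continuousOn_id.mul hlogC).sub continuousOn_id).sub
        ((continuousOn_id.mul continuousOn_const).sub continuousOn_const)).mul
      ((continuousOn_const.div (continuousOn_const.mul continuousOn_id)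
        (fun x hx => mul_ne_zero hb0.ne' (hne1 x hx))).sub continuousOn_const)
  rw [intervalIntegral.integral_eq_sub_of_hasDerivAt hH hcont]
  have hb : b ≠ 0 := hb0.ne'
  rw [hc] at hK ⊢
  simp only [Real.log_one]
  field_simp
  ring

theorem omega1_tail_integral :
    (∀ t : ℝ, 1 ≤ t →
      (∫ b in (0:ℝ)..(1 / t), ∫ α in (1 - b)..1, ∫ a in (1 - b)..α,
          ∫ _s in (t * (α - a) / a)..((α - a) / (a * b * α)), (1 : ℝ))
        = ∫ b in (0:ℝ)..(1 / t),
            (b * (b * (2 + b) * t - 8) + 2 * (b * (2 + t) - 4) * Real.log (1 - b))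
              / (4 * b)) ∧
    (fun t : ℝ => ∫ b in (0:ℝ)..(1 / t), ∫ α in (1 - b)..1, ∫ a in (1 - b)..α,
        ∫ _s in (t * (α - a) / a)..((α - a) / (a * b * α)), (1 : ℝ))
      =O[atTop] (fun t : ℝ => t ^ (-3 : ℤ)) := by
  have key : ∀ t : ℝ, 1 ≤ t →
      (∫ b in (0:ℝ)..(1 / t), ∫ α in (1 - b)..1, ∫ a in (1 - b)..α,
          ∫ _s in (t * (α - a) / a)..((α - a) / (a * b * α)), (1 : ℝ))
        = ∫ b in (0:ℝ)..(1 / t),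
            (b * (b * (2 + b) * t - 8) + 2 * (b * (2 + t) - 4) * Real.log (1 - b))
              / (4 * b) := by
    intro t ht
    have ht0 : (0:ℝ) < t := by linarith
    apply intervalIntegral.integral_congr_ae
    have hae : ∀ᵐ x : ℝ ∂volume, x ≠ 1 := by
      refine ae_iff.mpr ?_
      simp [measure_singleton]
    filter_upwards [hae] with x hx1 hx
    rw [Set.uIoc_of_le (by positivity : (0:ℝ) ≤ 1 / t)] at hx
    have hx1' : x < 1 :=
      lt_of_le_of_ne (le_trans hx.2 (by rw [div_le_one ht0]; exact ht)) hx1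
    exact omega1_triple_eq t x hx.1 hx1'
  refine ⟨key, ?_⟩
  rw [isBigO_iff]
  refine ⟨7, ?_⟩
  filter_upwards [eventually_ge_atTop (2:ℝ)] with t ht
  have ht0 : (0:ℝ) < t := by linarith
  rw [key t (by linarith)]
  have hbound : ∀ x ∈ Set.uIoc (0:ℝ) (1 / t),
      ‖(x * (x * (2 + x) * t - 8) + 2 * (x * (2 + t) - 4) * Real.log (1 - x)) / (4 * x)‖
        ≤ 7 / t ^ 2 := by
    intro x hx
    rw [Set.uIoc_of_le (by positivity : (0:ℝ) ≤ 1 / t)] at hx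
    obtain ⟨hx0, hxle⟩ := hx
    have hxt : x * t ≤ 1 := (le_div_iff₀ ht0).mp hxle
    have hxhalf : x ≤ 1 / 2 := by nlinarith
    have hx1 : x < 1 := by linarith
    have hE := Real.abs_log_sub_add_sum_range_le
      (show |x| < 1 by rw [abs_of_pos hx0]; linarith) 2
    simp [Finset.sum_range_succ, abs_of_pos hx0] at hE
    set E := x + x ^ 2 / 2 + Real.log (1 - x) with hEdef
    have hE2 : |E| ≤ 2 * x ^ 3 := by
      refine le_trans ?_ (show x ^ 3 / (1 - x) ≤ 2 * x ^ 3 by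
        rw [div_le_iff₀ (by linarith)]; nlinarith [pow_nonneg hx0.le 3])
      convert hE using 2
      · rfl
      ring
    have hFeq : (x * (x * (2 + x) * t - 8) + 2 * (x * (2 + t) - 4) * Real.log (1 - x)) / (4 * x)
        = -x ^ 2 / 2 + (x * (2 + t) - 4) * E / (2 * x) := by
      rw [hEdef]; field_simp; ring
    rw [hFeq, Real.norm_eq_abs]
    have habs1 : |x * (2 + t) - 4| ≤ 4 := abs_le.mpr ⟨by nlinarith, by nlinarith⟩
    calc |(-x ^ 2 / 2 + (x * (2 + t) - 4) * E / (2 * x))|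
        ≤ |(-x ^ 2 / 2)| + |(x * (2 + t) - 4) * E / (2 * x)| := abs_add_le _ _
      _ = x ^ 2 / 2 + |x * (2 + t) - 4| * |E| / (2 * x) := by
          have e1 : |(-x ^ 2 / 2 : ℝ)| = x ^ 2 / 2 := by
            rw [abs_div, abs_neg, abs_of_nonneg (by positivity : (0:ℝ) ≤ x ^ 2), abs_two]
          have e2 : |(x * (2 + t) - 4) * E / (2 * x)| = |x * (2 + t) - 4| * |E| / (2 * x) := by
            rw [abs_div, abs_mul, abs_of_pos (show (0:ℝ) < 2 * x by linarith)]
          rw [e1, e2]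
      _ ≤ x ^ 2 / 2 + 4 * (2 * x ^ 3) / (2 * x) := by gcongr
      _ ≤ 7 / t ^ 2 := by
          have h4 : 4 * (2 * x ^ 3) / (2 * x) = 4 * x ^ 2 := by
            field_simp
          rw [h4, le_div_iff₀ (by positivity : (0:ℝ) < t ^ 2)]
          nlinarith [mul_nonneg hx0.le ht0.le, sq_nonneg (x * t)]
  calc ‖∫ b in (0:ℝ)..(1 / t),
      (b * (b * (2 + b) * t - 8) + 2 * (b * (2 + t) - 4) * Real.log (1 - b)) / (4 * b)‖
      ≤ 7 / t ^ 2 * |1 / t - 0| := intervalIntegral.norm_integral_le_of_norm_le_const hbound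
    _ = 7 * ‖t ^ (-3 : ℤ)‖ := by
        rw [sub_zero, abs_of_pos (by positivity), Real.norm_eq_abs,
          abs_of_pos (by positivity : (0:ℝ) < t ^ (-3 : ℤ))]
        rw [show ((-3 : ℤ) = -(3 : ℕ)) by norm_num, zpow_neg, zpow_natCast]
        field_simp
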